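/- Let F(w) := f(w − α∇f(w)). Then for every α ∈ [0, 1/L], F is differentiable with ∇F(w) = (I − α∇²f(w)) ∇f(w − α∇f(w)), and ∇F is Lipschitz continuous with constant L_F := 4L + αρB, i.e., ‖∇F(w) − ∇F(u)‖ ≤ (4L + αρB)‖w − u‖ for all w, u ∈ ℝ^d. -/

import Mathlib

open InnerProductSpace RealInnerProductSpace

section Aux

variable {E : Type*} [NormedAddCommGroup E] [InnerProductSpace ℝ E] [CompleteSpace E]

lemma aux_gradient_eq (f : E → ℝ) :
    gradient f = ⇑(toDual ℝ E).symm ∘ fderiv ℝ f := rfl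

lemma aux_gradient_contDiff {f : E → ℝ} (hf : ContDiff ℝ 2 f) :
    ContDiff ℝ 1 (gradient f) := by
  rw [aux_gradient_eq]
  exact ((toDual ℝ E).symm.toContinuousLinearEquiv.toContinuousLinearMap.contDiff).comp
    (hf.fderiv_right (m := 1) (by norm_num))

lemma aux_fderiv_gradient_apply (f : E → ℝ) (w a : E) :
    fderiv ℝ (gradient f) w a = (toDual ℝ E).symm (fderiv ℝ (fderiv ℝ f) w a) := by
  rw [aux_gradient_eq f, LinearIsometryEquiv.comp_fderiv]; rfl

lemma aux_hessian_symm {f : E → ℝ} (hf : ContDiff ℝ 2 f) (w a b : E) :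
    ⟪fderiv ℝ (gradient f) w a, b⟫_ℝ = ⟪a, fderiv ℝ (gradient f) w b⟫_ℝ := by
  have hsym := (hf.contDiffAt (x := w)).isSymmSndFDerivAt (n := 2) (by simp [minSmoothness_of_isRCLikeNormedField])
  rw [aux_fderiv_gradient_apply, aux_fderiv_gradient_apply, toDual_symm_apply,
    real_inner_comm, toDual_symm_apply]
  exact hsym.eq a b

end Aux

set_option synthInstance.maxHeartbeats 1000000 in
set_option maxHeartbeats 1000000 in
/-- Let `f : ℝ^d → ℝ` be twice continuously differentiable, `L`-smooth, with gradient
bounded by `B` and Hessian `ρ`-Lipschitz (operator norm).  Let `F w := f (w - α∇f w)`.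
Then for every `α ∈ [0, 1/L]`, `F` is differentiable with
`∇F w = (I - α ∇²f w) (∇f (w - α ∇f w))`, and `∇F` is Lipschitz with constant
`L_F := 4L + αρB`. -/
theorem stmt_0 {d : ℕ} (f : EuclideanSpace ℝ (Fin d) → ℝ) (L B ρ α : ℝ)
    (hf : ContDiff ℝ 2 f)
    (hsmooth : ∀ w u, ‖gradient f w - gradient f u‖ ≤ L * ‖w - u‖)
    (hB : ∀ w, ‖gradient f w‖ ≤ B)
    (hρ : ∀ w u, ‖fderiv ℝ (gradient f) w - fderiv ℝ (gradient f) u‖ ≤ ρ * ‖w - u‖)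
    (hα0 : 0 ≤ α) (hαL : α ≤ 1 / L) :
    (∀ w : EuclideanSpace ℝ (Fin d),
      HasGradientAt (fun v => f (v - α • gradient f v))
        ((ContinuousLinearMap.id ℝ (EuclideanSpace ℝ (Fin d)) - α • fderiv ℝ (gradient f) w)
          (gradient f (w - α • gradient f w))) w) ∧
    (∀ w u : EuclideanSpace ℝ (Fin d),
      ‖gradient (fun v => f (v - α • gradient f v)) w -
        gradient (fun v => f (v - α • gradient f v)) u‖ ≤ (4 * L + α * ρ * B) * ‖w - u‖) := by
  set H : EuclideanSpace ℝ (Fin d) → EuclideanSpace ℝ (Fin d) →L[ℝ] EuclideanSpace ℝ (Fin d) :=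
    fun w => fderiv ℝ (gradient f) w with hH
  set g : EuclideanSpace ℝ (Fin d) → EuclideanSpace ℝ (Fin d) :=
    fun v => v - α • gradient f v with hg
  have hgradC1 : ContDiff ℝ 1 (gradient f) := aux_gradient_contDiff hf
  have hgrad_diff : ∀ v, HasFDerivAt (gradient f) (H v) v := fun v =>
    ((hgradC1.differentiable one_ne_zero) v).hasFDerivAt
  have hg_fderiv : ∀ w, HasFDerivAt g
      (ContinuousLinearMap.id ℝ (EuclideanSpace ℝ (Fin d)) - α • H w) w := fun w =>
    (hasFDerivAt_id w).sub ((hgrad_diff w).const_smul α)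
  have hf_grad : ∀ p, HasGradientAt f (gradient f p) p := fun p =>
    ((hf.differentiable (by norm_num)) p).hasGradientAt
  have part1 : ∀ w,
      HasGradientAt (fun v => f (v - α • gradient f v))
        ((ContinuousLinearMap.id ℝ (EuclideanSpace ℝ (Fin d)) - α • H w) (gradient f (g w))) w := by
    intro w
    have hcomp : HasFDerivAt (fun v => f (g v))
        ((toDual ℝ (EuclideanSpace ℝ (Fin d)) (gradient f (g w))).comp
          (ContinuousLinearMap.id ℝ (EuclideanSpace ℝ (Fin d)) - α • H w)) w :=
      HasFDerivAt.comp w ((hf_grad (g w)).hasFDerivAt) (hg_fderiv w)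
    have heq : toDual ℝ (EuclideanSpace ℝ (Fin d))
          ((ContinuousLinearMap.id ℝ (EuclideanSpace ℝ (Fin d)) - α • H w) (gradient f (g w))) =
        (toDual ℝ (EuclideanSpace ℝ (Fin d)) (gradient f (g w))).comp
          (ContinuousLinearMap.id ℝ (EuclideanSpace ℝ (Fin d)) - α • H w) := by
      ext x
      simp only [toDual_apply_apply, ContinuousLinearMap.comp_apply, ContinuousLinearMap.sub_apply,
        ContinuousLinearMap.id_apply, ContinuousLinearMap.smul_apply,
        inner_sub_left, inner_sub_right, real_inner_smul_left, real_inner_smul_right]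
      rw [aux_hessian_symm hf]
    rw [hasGradientAt_iff_hasFDerivAt, heq]
    exact hcomp
  refine ⟨part1, ?_⟩
  rcases subsingleton_or_nontrivial (EuclideanSpace ℝ (Fin d)) with hsub | hnt
  · intro w u
    rw [Subsingleton.elim w u]
    simp
  obtain ⟨w0, u0, hne⟩ := exists_pair_ne (EuclideanSpace ℝ (Fin d))
  have hL0 : 0 ≤ L := by
    have h1 := (norm_nonneg (gradient f w0 - gradient f u0)).trans (hsmooth w0 u0)
    have h2 : 0 < ‖w0 - u0‖ := by rwa [norm_sub_pos_iff]
    nlinarith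
  have hαL1 : α * L ≤ 1 := by
    rcases eq_or_lt_of_le hL0 with h | h
    · simp [← h]
    · rw [le_div_iff₀ h] at hαL; nlinarith
  have hB0 : 0 ≤ B := (norm_nonneg _).trans (hB 0)
  have hlip : LipschitzWith ⟨L, hL0⟩ (gradient f) := by
    apply LipschitzWith.of_dist_le_mul
    intro x y
    rw [dist_eq_norm, dist_eq_norm]; exact hsmooth x y
  have hHnorm : ∀ w, ‖H w‖ ≤ L := fun w => norm_fderiv_le_of_lipschitz ℝ hlip
  have hop : ∀ w, ‖ContinuousLinearMap.id ℝ (EuclideanSpace ℝ (Fin d)) - α • H w‖ ≤ 2 := by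
    intro w
    calc ‖ContinuousLinearMap.id ℝ (EuclideanSpace ℝ (Fin d)) - α • H w‖
        ≤ ‖ContinuousLinearMap.id ℝ (EuclideanSpace ℝ (Fin d))‖ + ‖α • H w‖ := norm_sub_le _ _
      _ ≤ 1 + α * L := by
          have h1 : ‖α • H w‖ ≤ α * L := by
            rw [norm_smul α (H w), Real.norm_of_nonneg hα0]
            exact mul_le_mul_of_nonneg_left (hHnorm w) hα0
          have h2 : ‖ContinuousLinearMap.id ℝ (EuclideanSpace ℝ (Fin d))‖ ≤ 1 :=
            ContinuousLinearMap.norm_id_le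
          linarith
      _ ≤ 2 := by linarith
  have hg_lip : ∀ w u, ‖g w - g u‖ ≤ 2 * ‖w - u‖ := by
    intro w u
    have hrw : g w - g u = (w - u) - α • (gradient f w - gradient f u) := by
      simp only [hg, smul_sub]; abel
    rw [hrw]
    calc ‖(w - u) - α • (gradient f w - gradient f u)‖
        ≤ ‖w - u‖ + ‖α • (gradient f w - gradient f u)‖ := norm_sub_le _ _
      _ ≤ ‖w - u‖ + α * (L * ‖w - u‖) := by
          have : ‖α • (gradient f w - gradient f u)‖ ≤ α * (L * ‖w - u‖) := by
            rw [norm_smul α (gradient f w - gradient f u), Real.norm_of_nonneg hα0]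
            exact mul_le_mul_of_nonneg_left (hsmooth w u) hα0
          linarith
      _ ≤ 2 * ‖w - u‖ := by nlinarith [norm_nonneg (w - u)]
  intro w u
  rw [(part1 w).gradient, (part1 u).gradient]
  set aw := gradient f (g w) with haw
  set au := gradient f (g u) with hau
  have hsplit : (ContinuousLinearMap.id ℝ (EuclideanSpace ℝ (Fin d)) - α • H w) aw
      - (ContinuousLinearMap.id ℝ (EuclideanSpace ℝ (Fin d)) - α • H u) au
      = (ContinuousLinearMap.id ℝ (EuclideanSpace ℝ (Fin d)) - α • H w) (aw - au)
        + α • ((H u - H w) au) := by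
    simp only [ContinuousLinearMap.sub_apply, ContinuousLinearMap.id_apply,
      ContinuousLinearMap.smul_apply, map_sub, smul_sub]
    abel
  rw [hsplit]
  have h1 : ‖(ContinuousLinearMap.id ℝ (EuclideanSpace ℝ (Fin d)) - α • H w) (aw - au)‖
      ≤ 2 * (L * (2 * ‖w - u‖)) := by
    calc ‖(ContinuousLinearMap.id ℝ (EuclideanSpace ℝ (Fin d)) - α • H w) (aw - au)‖
        ≤ ‖ContinuousLinearMap.id ℝ (EuclideanSpace ℝ (Fin d)) - α • H w‖ * ‖aw - au‖ :=
          ContinuousLinearMap.le_opNorm _ _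
      _ ≤ 2 * (L * (2 * ‖w - u‖)) := by
          apply mul_le_mul (hop w) ?_ (norm_nonneg _) (by norm_num)
          exact (hsmooth (g w) (g u)).trans (mul_le_mul_of_nonneg_left (hg_lip w u) hL0)
  have h2 : ‖α • ((H u - H w) au)‖ ≤ α * (ρ * ‖w - u‖ * B) := by
    rw [norm_smul α ((H u - H w) au), Real.norm_of_nonneg hα0]
    apply mul_le_mul_of_nonneg_left ?_ hα0
    have hρ' : ‖H u - H w‖ ≤ ρ * ‖w - u‖ := by
      have := hρ u w
      rwa [norm_sub_rev u w] at this
    calc ‖(H u - H w) au‖ ≤ ‖H u - H w‖ * ‖au‖ := ContinuousLinearMap.le_opNorm _ _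
      _ ≤ ρ * ‖w - u‖ * B :=
          mul_le_mul hρ' (hB _) (norm_nonneg _) ((norm_nonneg _).trans hρ')
  calc ‖(ContinuousLinearMap.id ℝ (EuclideanSpace ℝ (Fin d)) - α • H w) (aw - au)
        + α • ((H u - H w) au)‖
      ≤ ‖(ContinuousLinearMap.id ℝ (EuclideanSpace ℝ (Fin d)) - α • H w) (aw - au)‖
        + ‖α • ((H u - H w) au)‖ := norm_add_le _ _
    _ ≤ 2 * (L * (2 * ‖w - u‖)) + α * (ρ * ‖w - u‖ * B) := add_le_add h1 h2
    _ = (4 * L + α * ρ * B) * ‖w - u‖ := by ring
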